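/- arXiv:2011.03013 — 3 statements merged into one kernel-verified Lean document; each statement's English description precedes it below -/
import Mathlib

section
/- Let μ ∈ (0, 1/4], let n be a positive integer, let p be a prime, and let v ∈ (ℤ/pℤ)^n. Then there exists T ⊆ [n] such that v_i ∈ N_μ(v_T) for all i ∉ T, ρ_μ(v_T) ≤ (1 - μ/2)^{|T|}, and consequently |T| ≤ (2/μ)·log(1/ρ_μ(v)). -/
/-- `probX μ v x` is the probability that the random walk `X_μ(v) = ε₁v₁ + ⋯ + εₙvₙ`
(valued in `ℤ/pℤ`) equals `x`, where `ε₁,…,εₙ` are i.i.d. with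
`P(εᵢ = 1) = P(εᵢ = -1) = μ/2` and `P(εᵢ = 0) = 1 - μ`. -/
noncomputable def probX {p : ℕ} [NeZero p] {ι : Type} [Fintype ι] [DecidableEq ι]
    (μ : ℝ) (v : ι → ZMod p) (x : ZMod p) : ℝ :=
  ∑ ε : ι → ({-1, 0, 1} : Finset ℤ),
    (∏ i, if (ε i : ℤ) = 0 then 1 - μ else μ / 2) *
      (if (∑ i, ((ε i : ℤ) : ZMod p) * v i) = x then 1 else 0)

/-- `rho μ v = max_x P(X_μ(v) = x)`, the largest atom of the random walk `X_μ(v)`. -/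
noncomputable def rho {p : ℕ} [NeZero p] {ι : Type} [Fintype ι] [DecidableEq ι]
    (μ : ℝ) (v : ι → ZMod p) : ℝ :=
  ⨆ x : ZMod p, probX μ v x
open scoped Classical in
/-- The neighbourhood `N_μ(w) = {x : P(X_μ(w) = x) > (1/2) P(X_μ(w) = 0)}`. -/
noncomputable def nbhd {p : ℕ} [NeZero p] {ι : Type} [Fintype ι] [DecidableEq ι]
    (μ : ℝ) (w : ι → ZMod p) : Finset (ZMod p) :=
  Finset.univ.filter fun x => probX μ w x > probX μ w 0 / 2

open Finset

section Aux

variable {p : ℕ} [NeZero p]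

local notation "S" => ({-1, 0, 1} : Finset ℤ)

/-- negation as an equivalence of `{-1,0,1}`. -/
def negS : ({-1, 0, 1} : Finset ℤ) ≃ ({-1, 0, 1} : Finset ℤ) where
  toFun s := ⟨-s.1, by have := s.2; simp only [Finset.mem_insert, Finset.mem_singleton] at *; omega⟩
  invFun s := ⟨-s.1, by have := s.2; simp only [Finset.mem_insert, Finset.mem_singleton] at *; omega⟩
  left_inv s := by simp
  right_inv s := by simp

lemma probX_term_nonneg {ι : Type} [Fintype ι] [DecidableEq ι] {μ : ℝ}
    (hμ0 : 0 ≤ μ) (hμ1 : μ ≤ 1) (v : ι → ZMod p) (x : ZMod p) (ε : ι → S) :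
    0 ≤ (∏ i, if (ε i : ℤ) = 0 then 1 - μ else μ / 2) *
      (if (∑ i, ((ε i : ℤ) : ZMod p) * v i) = x then 1 else 0) := by
  apply mul_nonneg
  · apply Finset.prod_nonneg
    intro i _
    split_ifs <;> linarith
  · split_ifs <;> norm_num

lemma probX_nonneg {ι : Type} [Fintype ι] [DecidableEq ι] {μ : ℝ}
    (hμ0 : 0 ≤ μ) (hμ1 : μ ≤ 1) (v : ι → ZMod p) (x : ZMod p) :
    0 ≤ probX μ v x :=
  Finset.sum_nonneg fun ε _ => probX_term_nonneg hμ0 hμ1 v x ε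

lemma probX_reindex {ι κ : Type} [Fintype ι] [DecidableEq ι] [Fintype κ] [DecidableEq κ]
    (μ : ℝ) (w : ι → ZMod p) (e : κ ≃ ι) (x : ZMod p) :
    probX μ (w ∘ e) x = probX μ w x := by
  unfold probX
  refine Fintype.sum_equiv (Equiv.arrowCongr e (Equiv.refl S)) _ _ fun ε => ?_
  have h1 : (∏ i, if (ε i : ℤ) = 0 then 1 - μ else μ / 2)
      = ∏ i, if (((Equiv.arrowCongr e (Equiv.refl S)) ε i : ℤ)) = 0 then 1 - μ else μ / 2 := by
    refine Fintype.prod_equiv e _ _ fun i => ?_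
    simp [Equiv.arrowCongr]
  have h2 : (∑ i, ((ε i : ℤ) : ZMod p) * (w ∘ e) i)
      = ∑ i, (((Equiv.arrowCongr e (Equiv.refl S)) ε i : ℤ) : ZMod p) * w i := by
    refine Fintype.sum_equiv e _ _ fun i => ?_
    simp [Equiv.arrowCongr]
  rw [h1, h2]

lemma probX_neg {ι : Type} [Fintype ι] [DecidableEq ι] (μ : ℝ) (w : ι → ZMod p) (x : ZMod p) :
    probX μ w (-x) = probX μ w x := by
  unfold probX
  refine Fintype.sum_equiv (Equiv.arrowCongr (Equiv.refl ι) negS) _ _ fun ε => ?_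
  refine congr_arg₂ (· * ·) ?_ ?_
  · refine Finset.prod_congr rfl fun i _ => ?_
    refine if_congr ?_ rfl rfl
    simp only [Equiv.arrowCongr, Equiv.coe_fn_mk, Equiv.refl_symm, Equiv.refl_apply,
      Function.comp_apply, negS]
    omega
  · refine if_congr ?_ rfl rfl
    have h : (∑ i, (((Equiv.arrowCongr (Equiv.refl ι) negS) ε i : ℤ) : ZMod p) * w i)
        = -∑ i, ((ε i : ℤ) : ZMod p) * w i := by
      rw [← Finset.sum_neg_distrib]
      refine Finset.sum_congr rfl fun i _ => ?_
      simp only [Equiv.arrowCongr, Equiv.coe_fn_mk, Equiv.refl_symm, Equiv.refl_apply,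
        Function.comp_apply, negS]
      push_cast
      ring
    rw [h]
    constructor
    · intro h'; rw [h', neg_neg]
    · intro h'; rw [← h', neg_neg]

lemma probX_of_isEmpty {ι : Type} [Fintype ι] [DecidableEq ι] [IsEmpty ι]
    (μ : ℝ) (w : ι → ZMod p) (x : ZMod p) :
    probX μ w x = if x = 0 then 1 else 0 := by
  unfold probX
  rw [Fintype.sum_unique]
  simp [eq_comm]

lemma probX_option {ι : Type} [Fintype ι] [DecidableEq ι]
    (μ : ℝ) (w : Option ι → ZMod p) (x : ZMod p) :
    probX μ w x = (1 - μ) * probX μ (fun i => w (some i)) x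
      + μ / 2 * probX μ (fun i => w (some i)) (x - w none)
      + μ / 2 * probX μ (fun i => w (some i)) (x + w none) := by
  classical
  unfold probX
  rw [← (Equiv.piOptionEquivProd (β := fun _ : Option ι => S)).symm.sum_comp]
  rw [Fintype.sum_prod_type]
  have key : ∀ s : S, ∀ ε : ι → S,
      (∏ i, if (((Equiv.piOptionEquivProd (β := fun _ : Option ι => S)).symm (s, ε)) i : ℤ) = 0
        then 1 - μ else μ / 2) *
      (if (∑ i, ((((Equiv.piOptionEquivProd (β := fun _ : Option ι => S)).symm (s, ε)) i : ℤ) : ZMod p) * w i) = x then 1 else 0)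
      = (if (s : ℤ) = 0 then 1 - μ else μ / 2) *
          ((∏ i, if (ε i : ℤ) = 0 then 1 - μ else μ / 2) *
          (if ((s : ℤ) : ZMod p) * w none + ∑ i, ((ε i : ℤ) : ZMod p) * w (some i) = x then 1 else 0)) := by
    intro s ε
    rw [Fintype.prod_option, Fintype.sum_option]
    simp only [Equiv.piOptionEquivProd_symm_apply, Option.elim]
    ring
  simp only [key, ← Finset.mul_sum]
  rw [Finset.sum_coe_sort S (fun s : ℤ => (if s = 0 then 1 - μ else μ / 2) *
        ∑ ε : ι → S, (∏ i, if (ε i : ℤ) = 0 then 1 - μ else μ / 2) *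
          (if ((s : ZMod p)) * w none + ∑ i, ((ε i : ℤ) : ZMod p) * w (some i) = x then 1 else 0))]
  rw [Finset.sum_insert (by decide), Finset.sum_insert (by decide), Finset.sum_singleton]
  have eneg : ∑ ε : ι → S, (∏ i, if (ε i : ℤ) = 0 then 1 - μ else μ / 2) *
        (if (((-1 : ℤ) : ZMod p)) * w none + ∑ i, ((ε i : ℤ) : ZMod p) * w (some i) = x then 1 else 0)
      = probX μ (fun i => w (some i)) (x + w none) := by
    unfold probX
    refine Finset.sum_congr rfl fun ε _ => ?_
    refine congr_arg₂ (· * ·) rfl (if_congr ?_ rfl rfl)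
    push_cast
    constructor <;> intro h' <;> linear_combination h' 
  have ezero : ∑ ε : ι → S, (∏ i, if (ε i : ℤ) = 0 then 1 - μ else μ / 2) *
        (if (((0 : ℤ) : ZMod p)) * w none + ∑ i, ((ε i : ℤ) : ZMod p) * w (some i) = x then 1 else 0)
      = probX μ (fun i => w (some i)) x := by
    unfold probX
    refine Finset.sum_congr rfl fun ε _ => ?_
    refine congr_arg₂ (· * ·) rfl (if_congr ?_ rfl rfl)
    push_cast
    constructor <;> intro h' <;> linear_combination h' 
  have eone : ∑ ε : ι → S, (∏ i, if (ε i : ℤ) = 0 then 1 - μ else μ / 2) *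
        (if (((1 : ℤ) : ZMod p)) * w none + ∑ i, ((ε i : ℤ) : ZMod p) * w (some i) = x then 1 else 0)
      = probX μ (fun i => w (some i)) (x - w none) := by
    unfold probX
    refine Finset.sum_congr rfl fun ε _ => ?_
    refine congr_arg₂ (· * ·) rfl (if_congr ?_ rfl rfl)
    push_cast
    constructor <;> intro h' <;> linear_combination h' 
  rw [eneg, ezero, eone, if_neg (by norm_num : ¬((-1 : ℤ) = 0)), if_pos rfl,
    if_neg (by norm_num : ¬((1 : ℤ) = 0))]
  unfold probX
  ring

end Aux

section Fourier

variable {p : ℕ} [NeZero p]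

/-- The Fourier transform of the distribution of the random walk. -/
noncomputable def phiDFT {ι : Type} [Fintype ι] [DecidableEq ι]
    (μ : ℝ) (w : ι → ZMod p) (ξ : ZMod p) : ℂ :=
  ∑ x : ZMod p, (probX μ w x : ℂ) * ZMod.stdAddChar (ξ * x)

lemma stdAddChar_norm (t : ZMod p) : ‖ZMod.stdAddChar t‖ = 1 := by
  rw [ZMod.stdAddChar_apply]
  exact Circle.norm_coe _

lemma sum_stdAddChar_mul (t : ZMod p) :
    ∑ ξ : ZMod p, ZMod.stdAddChar (ξ * t) = if t = 0 then (p : ℂ) else 0 := by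
  split_ifs with h
  · simp only [h, mul_zero, AddChar.map_zero_eq_one, Finset.sum_const, Finset.card_univ,
      ZMod.card, nsmul_eq_mul, mul_one]
  · have hne : (ZMod.stdAddChar (N := p)).mulShift t ≠ 1 := ZMod.isPrimitive_stdAddChar p h
    have h2 := AddChar.sum_eq_zero_of_ne_one hne
    simpa [AddChar.mulShift_apply, mul_comm] using h2

lemma probX_inversion {ι : Type} [Fintype ι] [DecidableEq ι]
    (μ : ℝ) (w : ι → ZMod p) (x : ZMod p) :
    (p : ℂ) * (probX μ w x : ℂ) = ∑ ξ : ZMod p, phiDFT μ w ξ * ZMod.stdAddChar (-(ξ * x)) := by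
  unfold phiDFT
  have step1 : ∀ ξ : ZMod p,
      (∑ y : ZMod p, (probX μ w y : ℂ) * ZMod.stdAddChar (ξ * y)) * ZMod.stdAddChar (-(ξ * x))
      = ∑ y : ZMod p, (probX μ w y : ℂ) * ZMod.stdAddChar (ξ * (y - x)) := by
    intro ξ
    rw [Finset.sum_mul]
    refine Finset.sum_congr rfl fun y _ => ?_
    have h : ξ * (y - x) = ξ * y + -(ξ * x) := by ring
    rw [h, AddChar.map_add_eq_mul, mul_assoc]
  simp only [step1]
  rw [Finset.sum_comm]
  have step2 : ∀ y : ZMod p,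
      ∑ ξ : ZMod p, (probX μ w y : ℂ) * ZMod.stdAddChar (ξ * (y - x))
      = (probX μ w y : ℂ) * (if y - x = 0 then (p : ℂ) else 0) := by
    intro y
    rw [← Finset.mul_sum, sum_stdAddChar_mul]
  simp only [step2, sub_eq_zero, mul_ite, mul_zero]
  rw [Finset.sum_ite_eq' Finset.univ x (fun y => (probX μ w y : ℂ) * (p : ℂ))]
  simp [mul_comm]

lemma phiDFT_reindex {ι κ : Type} [Fintype ι] [DecidableEq ι] [Fintype κ] [DecidableEq κ]
    (μ : ℝ) (w : ι → ZMod p) (e : κ ≃ ι) (ξ : ZMod p) :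
    phiDFT μ (w ∘ e) ξ = phiDFT μ w ξ := by
  unfold phiDFT
  refine Finset.sum_congr rfl fun x _ => ?_
  rw [probX_reindex]

lemma phiDFT_shift {ι : Type} [Fintype ι] [DecidableEq ι]
    (μ : ℝ) (w : ι → ZMod p) (ξ a : ZMod p) :
    ∑ x : ZMod p, (probX μ w (x - a) : ℂ) * ZMod.stdAddChar (ξ * x)
      = ZMod.stdAddChar (ξ * a) * phiDFT μ w ξ := by
  unfold phiDFT
  rw [Finset.mul_sum]
  refine (Fintype.sum_equiv (Equiv.addRight a) _ _ fun y => ?_).symm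
  simp only [Equiv.coe_addRight, add_sub_cancel_right]
  have h : ξ * (y + a) = ξ * y + ξ * a := by ring
  rw [h, AddChar.map_add_eq_mul]
  ring

lemma phiDFT_option {ι : Type} [Fintype ι] [DecidableEq ι]
    (μ : ℝ) (w : Option ι → ZMod p) (ξ : ZMod p) :
    phiDFT μ w ξ = ((1 - μ : ℝ) + (μ / 2 : ℝ) * ZMod.stdAddChar (ξ * w none)
        + (μ / 2 : ℝ) * ZMod.stdAddChar (-(ξ * w none))) * phiDFT μ (fun i => w (some i)) ξ := by
  have expand : phiDFT μ w ξ
      = ∑ x : ZMod p, (((1 - μ) * probX μ (fun i => w (some i)) x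
          + μ / 2 * probX μ (fun i => w (some i)) (x - w none)
          + μ / 2 * probX μ (fun i => w (some i)) (x + w none) : ℝ) : ℂ)
            * ZMod.stdAddChar (ξ * x) := by
    unfold phiDFT
    refine Finset.sum_congr rfl fun x _ => ?_
    rw [probX_option]
  rw [expand]
  push_cast
  simp only [add_mul, Finset.sum_add_distrib]
  have h1 : ∑ x : ZMod p, ((1 : ℂ) - μ) * (probX μ (fun i => w (some i)) x : ℂ)
      * ZMod.stdAddChar (ξ * x) = ((1 : ℂ) - μ) * phiDFT μ (fun i => w (some i)) ξ := by
    unfold phiDFT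
    rw [Finset.mul_sum]
    refine Finset.sum_congr rfl fun x _ => by ring
  have h2 : ∑ x : ZMod p, (μ : ℂ) / 2 * (probX μ (fun i => w (some i)) (x - w none) : ℂ)
      * ZMod.stdAddChar (ξ * x)
      = (μ : ℂ) / 2 * (ZMod.stdAddChar (ξ * w none) * phiDFT μ (fun i => w (some i)) ξ) := by
    rw [← phiDFT_shift μ _ ξ (w none), Finset.mul_sum]
    refine Finset.sum_congr rfl fun x _ => by ring
  have h3 : ∑ x : ZMod p, (μ : ℂ) / 2 * (probX μ (fun i => w (some i)) (x + w none) : ℂ)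
      * ZMod.stdAddChar (ξ * x)
      = (μ : ℂ) / 2 * (ZMod.stdAddChar (-(ξ * w none)) * phiDFT μ (fun i => w (some i)) ξ) := by
    have hsub : ∀ x : ZMod p, x + w none = x - (-(w none)) := fun x => by ring
    simp only [hsub]
    rw [show (-(ξ * w none)) = ξ * (-(w none)) from by ring, ← phiDFT_shift μ _ ξ (-(w none)),
      Finset.mul_sum]
    refine Finset.sum_congr rfl fun x _ => by ring
  rw [h1, h2, h3]
  ring

end Fourier

section Restr

variable {p n : ℕ} [NeZero p]

lemma probX_res_insert (μ : ℝ) (v : Fin n → ZMod p) (i : Fin n) (T : Finset (Fin n))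
    (hi : i ∉ T) (x : ZMod p) :
    probX μ (fun j : (insert i T : Finset (Fin n)) => v j.1) x
      = (1 - μ) * probX μ (fun j : T => v j.1) x
        + μ / 2 * probX μ (fun j : T => v j.1) (x - v i)
        + μ / 2 * probX μ (fun j : T => v j.1) (x + v i) := by
  classical
  set E := Finset.subtypeInsertEquivOption hi with hE
  set w : Option {y // y ∈ T} → ZMod p := fun o => v ((E.symm o).1) with hw
  have h1 : (fun j : (insert i T : Finset (Fin n)) => v j.1) = w ∘ E := by
    funext j
    simp [hw, E.symm_apply_apply]
  have hnone : w none = v i := rfl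
  have hsome : (fun o => w (some o)) = (fun j : T => v j.1) := rfl
  rw [h1, probX_reindex, probX_option, hnone, hsome]

lemma phiDFT_res_insert (μ : ℝ) (v : Fin n → ZMod p) (i : Fin n) (T : Finset (Fin n))
    (hi : i ∉ T) (ξ : ZMod p) :
    phiDFT μ (fun j : (insert i T : Finset (Fin n)) => v j.1) ξ
      = ((1 - μ : ℝ) + (μ / 2 : ℝ) * ZMod.stdAddChar (ξ * v i)
          + (μ / 2 : ℝ) * ZMod.stdAddChar (-(ξ * v i))) * phiDFT μ (fun j : T => v j.1) ξ := by
  classical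
  set E := Finset.subtypeInsertEquivOption hi with hE
  set w : Option {y // y ∈ T} → ZMod p := fun o => v ((E.symm o).1) with hw
  have h1 : (fun j : (insert i T : Finset (Fin n)) => v j.1) = w ∘ E := by
    funext j
    simp [hw, E.symm_apply_apply]
  have hnone : w none = v i := rfl
  have hsome : (fun o => w (some o)) = (fun j : T => v j.1) := rfl
  rw [h1, phiDFT_reindex, phiDFT_option, hnone, hsome]

lemma phiDFT_res_nonneg (μ : ℝ) (hμ0 : 0 ≤ μ) (hμ4 : μ ≤ 1 / 4) (v : Fin n → ZMod p)
    (T : Finset (Fin n)) (ξ : ZMod p) :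
    ∃ r : ℝ, 0 ≤ r ∧ phiDFT μ (fun j : T => v j.1) ξ = r := by
  classical
  induction T using Finset.induction_on with
  | empty =>
    refine ⟨1, zero_le_one, ?_⟩
    haveI : IsEmpty {x // x ∈ (∅ : Finset (Fin n))} := ⟨fun x => Finset.notMem_empty _ x.2⟩
    unfold phiDFT
    have h : ∀ x : ZMod p,
        (probX μ (fun j : (∅ : Finset (Fin n)) => v j.1) x : ℂ) * ZMod.stdAddChar (ξ * x)
          = if x = 0 then ZMod.stdAddChar (ξ * x) else 0 := by
      intro x
      rw [probX_of_isEmpty]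
      split_ifs <;> simp
    simp only [h]
    rw [Finset.sum_ite_eq' Finset.univ (0 : ZMod p) (fun x => ZMod.stdAddChar (ξ * x))]
    simp
  | @insert i T hi IH =>
    obtain ⟨r, hr, hphi⟩ := IH
    rw [phiDFT_res_insert μ v i T hi ξ, hphi]
    set z : ℂ := ZMod.stdAddChar (ξ * v i) with hz
    have hnorm : ‖z‖ = 1 := stdAddChar_norm _
    have hinv : ZMod.stdAddChar (-(ξ * v i)) = (starRingEnd ℂ) z := by
      rw [AddChar.map_neg_eq_inv, ← hz, Complex.inv_eq_conj]
      exact hnorm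
    refine ⟨((1 - μ) + μ * z.re) * r, ?_, ?_⟩
    · have hre : |z.re| ≤ 1 := by
        have h := Complex.abs_re_le_norm z
        rwa [hnorm] at h
      have h1 := abs_le.mp hre
      have : 0 ≤ (1 - μ) + μ * z.re := by nlinarith
      exact mul_nonneg this hr
    · rw [hinv]
      have hzz : z + (starRingEnd ℂ) z = 2 * (z.re : ℂ) := by
        have h := Complex.add_conj z
        push_cast at h
        exact h
      have hco : ((1 - μ : ℝ) : ℂ) + ((μ / 2 : ℝ) : ℂ) * z + ((μ / 2 : ℝ) : ℂ) * (starRingEnd ℂ) z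
          = ((((1 - μ) + μ * z.re : ℝ)) : ℂ) := by
        push_cast
        linear_combination ((μ : ℂ) / 2) * hzz
      rw [hco]
      push_cast
      ring

lemma probX_le_rho {ι : Type} [Fintype ι] [DecidableEq ι] (μ : ℝ) (w : ι → ZMod p) (x : ZMod p) :
    probX μ w x ≤ rho μ w :=
  le_ciSup (Set.Finite.bddAbove (Set.finite_range _)) x

lemma probX_res_le_zero (μ : ℝ) (hμ0 : 0 ≤ μ) (hμ4 : μ ≤ 1 / 4) (v : Fin n → ZMod p)
    (T : Finset (Fin n)) (x : ZMod p) :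
    probX μ (fun j : T => v j.1) x ≤ probX μ (fun j : T => v j.1) 0 := by
  classical
  have hp : (0 : ℝ) < p := by
    have := NeZero.ne p
    positivity
  choose r hr hphi using phiDFT_res_nonneg μ hμ0 hμ4 v T
  have hx := probX_inversion μ (fun j : T => v j.1) x
  have h0 := probX_inversion μ (fun j : T => v j.1) 0
  have h0' : (p : ℝ) * probX μ (fun j : T => v j.1) 0 = ∑ ξ : ZMod p, r ξ := by
    have h : ∑ ξ : ZMod p, phiDFT μ (fun j : T => v j.1) ξ * ZMod.stdAddChar (-(ξ * 0))
        = (((∑ ξ : ZMod p, r ξ : ℝ)) : ℂ) := by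
      push_cast
      refine Finset.sum_congr rfl fun ξ _ => ?_
      rw [hphi ξ]
      simp
    rw [h] at h0
    exact_mod_cast h0
  have hxle : (p : ℝ) * probX μ (fun j : T => v j.1) x ≤ ∑ ξ : ZMod p, r ξ := by
    have hre : (p : ℝ) * probX μ (fun j : T => v j.1) x
        = (∑ ξ : ZMod p, phiDFT μ (fun j : T => v j.1) ξ * ZMod.stdAddChar (-(ξ * x))).re := by
      rw [← hx]
      simp
    rw [hre]
    calc (∑ ξ : ZMod p, phiDFT μ (fun j : T => v j.1) ξ * ZMod.stdAddChar (-(ξ * x))).re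
        ≤ ‖∑ ξ : ZMod p, phiDFT μ (fun j : T => v j.1) ξ * ZMod.stdAddChar (-(ξ * x))‖ :=
          Complex.re_le_norm _
      _ ≤ ∑ ξ : ZMod p, ‖phiDFT μ (fun j : T => v j.1) ξ * ZMod.stdAddChar (-(ξ * x))‖ :=
          norm_sum_le _ _
      _ = ∑ ξ : ZMod p, r ξ := by
          refine Finset.sum_congr rfl fun ξ _ => ?_
          rw [norm_mul, stdAddChar_norm, hphi ξ, mul_one, Complex.norm_real,
            Real.norm_of_nonneg (hr ξ)]
  have := hxle.trans_eq h0'.symm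
  exact le_of_mul_le_mul_left this hp

lemma rho_res_eq (μ : ℝ) (hμ0 : 0 ≤ μ) (hμ4 : μ ≤ 1 / 4) (v : Fin n → ZMod p)
    (T : Finset (Fin n)) :
    rho μ (fun j : T => v j.1) = probX μ (fun j : T => v j.1) 0 := by
  refine le_antisymm (ciSup_le fun x => probX_res_le_zero μ hμ0 hμ4 v T x) ?_
  exact probX_le_rho μ _ 0

lemma rho_res_insert_le (μ : ℝ) (hμ0 : 0 ≤ μ) (hμ1 : μ ≤ 1) (v : Fin n → ZMod p)
    (i : Fin n) (T : Finset (Fin n)) (hi : i ∉ T) :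
    rho μ (fun j : (insert i T : Finset (Fin n)) => v j.1) ≤ rho μ (fun j : T => v j.1) := by
  refine ciSup_le fun x => ?_
  rw [probX_res_insert μ v i T hi x]
  have ha := probX_le_rho μ (fun j : T => v j.1) x
  have hb := probX_le_rho μ (fun j : T => v j.1) (x - v i)
  have hc := probX_le_rho μ (fun j : T => v j.1) (x + v i)
  nlinarith

lemma rho_res_union_le (μ : ℝ) (hμ0 : 0 ≤ μ) (hμ1 : μ ≤ 1) (v : Fin n → ZMod p)
    (T U : Finset (Fin n)) :
    rho μ (fun j : (T ∪ U : Finset (Fin n)) => v j.1) ≤ rho μ (fun j : T => v j.1) := by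
  classical
  induction U using Finset.induction_on with
  | empty => rw [Finset.union_empty]
  | @insert a U ha IH =>
    by_cases h : a ∈ T ∪ U
    · have he : T ∪ insert a U = T ∪ U := by
        rw [Finset.union_insert, Finset.insert_eq_self.mpr h]
      rw [he]
      exact IH
    · have he : T ∪ insert a U = insert a (T ∪ U) := Finset.union_insert a T U
      rw [he]
      exact (rho_res_insert_le μ hμ0 hμ1 v a (T ∪ U) h).trans IH

lemma rho_le_rho_res (μ : ℝ) (hμ0 : 0 ≤ μ) (hμ1 : μ ≤ 1) (v : Fin n → ZMod p)
    (T : Finset (Fin n)) :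
    rho μ v ≤ rho μ (fun j : T => v j.1) := by
  classical
  have h1 : rho μ v = rho μ (fun j : (Finset.univ : Finset (Fin n)) => v j.1) := by
    unfold rho
    refine congrArg _ (funext fun x => ?_)
    have he : (fun j : (Finset.univ : Finset (Fin n)) => v j.1)
        = v ∘ (Equiv.subtypeUnivEquiv (fun y => Finset.mem_univ y)) := rfl
    rw [he, probX_reindex]
  rw [h1]
  have h2 : (Finset.univ : Finset (Fin n)) = T ∪ (Finset.univ \ T) :=
    (Finset.union_sdiff_of_subset (Finset.subset_univ T)).symm
  rw [h2]
  exact rho_res_union_le μ hμ0 hμ1 v T _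

lemma rho_pos (μ : ℝ) (hμ0 : 0 ≤ μ) (hμ1 : μ < 1) (v : Fin n → ZMod p) :
    0 < rho μ v := by
  classical
  have h : 0 < probX μ v 0 := by
    set ε0 : Fin n → ({-1, 0, 1} : Finset ℤ) := fun _ => ⟨0, by norm_num⟩ with hε0
    have hterm : (∏ i, if ((ε0 i : ℤ)) = 0 then 1 - μ else μ / 2) *
        (if (∑ i, ((ε0 i : ℤ) : ZMod p) * v i) = 0 then 1 else 0) = (1 - μ) ^ n := by
      simp [hε0]
    unfold probX
    refine lt_of_lt_of_le ?_ (Finset.single_le_sum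
      (fun ε _ => probX_term_nonneg hμ0 hμ1.le v 0 ε) (Finset.mem_univ ε0))
    rw [hterm]
    have h1 : (0 : ℝ) < 1 - μ := by linarith
    positivity
  exact h.trans_le (probX_le_rho μ v 0)

end Restr

/-- **Lemma 2.1.** For `μ ∈ (0, 1/4]`, `n ≥ 1`, `p` prime and `v ∈ (ℤ/pℤ)ⁿ`, there exists
`T ⊆ [n]` such that `vᵢ ∈ N_μ(v_T)` for all `i ∉ T`, `ρ_μ(v_T) ≤ (1 - μ/2)^{|T|}`, and
consequently `|T| ≤ (2/μ) log(1/ρ_μ(v))`. -/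
theorem greedy_inverse_littlewood_offord
    (μ : ℝ) (hμ : μ ∈ Set.Ioc (0 : ℝ) (1 / 4)) (n p : ℕ) (hn : 0 < n)
    [Fact p.Prime] (v : Fin n → ZMod p) :
    ∃ T : Finset (Fin n),
      (∀ i ∉ T, v i ∈ nbhd μ (fun j : T => v j.1)) ∧
      rho μ (fun j : T => v j.1) ≤ (1 - μ / 2) ^ T.card ∧
      (T.card : ℝ) ≤ 2 / μ * Real.log (rho μ v)⁻¹ := by
  classical
  obtain ⟨hμ0, hμ4⟩ := hμ
  have hμ0' : (0 : ℝ) ≤ μ := hμ0.le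
  have hμ1 : μ ≤ 1 := by linarith
  haveI : NeZero p := ⟨(Fact.out : p.Prime).ne_zero⟩
  -- greedy construction
  have greedy : ∀ k : ℕ, ∀ T : Finset (Fin n), (Finset.univ \ T).card ≤ k →
      rho μ (fun j : T => v j.1) ≤ (1 - μ / 2) ^ T.card →
      ∃ T' : Finset (Fin n), (∀ i ∉ T', v i ∈ nbhd μ (fun j : T' => v j.1)) ∧
        rho μ (fun j : T' => v j.1) ≤ (1 - μ / 2) ^ T'.card := by
    intro k
    induction k with
    | zero =>
      intro T hcard hrho
      have hT : T = Finset.univ := by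
        have h1 : Finset.univ \ T = ∅ := Finset.card_eq_zero.mp (Nat.le_zero.mp hcard)
        have h2 : (Finset.univ : Finset (Fin n)) ⊆ T := Finset.sdiff_eq_empty_iff_subset.mp h1
        exact Finset.univ_subset_iff.mp h2
      exact ⟨T, fun i hi => absurd (hT ▸ Finset.mem_univ i) hi, hrho⟩
    | succ k IH =>
      intro T hcard hrho
      by_cases hgood : ∀ i ∉ T, v i ∈ nbhd μ (fun j : T => v j.1)
      · exact ⟨T, hgood, hrho⟩
      · push_neg at hgood
        obtain ⟨i, hiT, hnb⟩ := hgood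
        have hP : probX μ (fun j : T => v j.1) (v i) ≤ probX μ (fun j : T => v j.1) 0 / 2 := by
          have h := hnb
          rw [nbhd, Finset.mem_filter] at h
          push_neg at h
          exact h (Finset.mem_univ _)
        have hstep : rho μ (fun j : (insert i T : Finset (Fin n)) => v j.1)
            ≤ (1 - μ / 2) * rho μ (fun j : T => v j.1) := by
          rw [rho_res_eq μ hμ0' hμ4 v (insert i T), rho_res_eq μ hμ0' hμ4 v T,
            probX_res_insert μ v i T hiT 0]
          have h1 : (0 : ZMod p) - v i = -(v i) := by ring
          have h2 : (0 : ZMod p) + v i = v i := by ring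
          rw [h1, h2, probX_neg]
          nlinarith [probX_nonneg hμ0' hμ1 (fun j : T => v j.1) (0 : ZMod p), hP]
        refine IH (insert i T) ?_ ?_
        · have hmem : i ∈ Finset.univ \ T := by simp [hiT]
          have h1 : Finset.univ \ insert i T = (Finset.univ \ T).erase i := by
            rw [Finset.sdiff_insert]
          rw [h1, Finset.card_erase_of_mem hmem]
          have h2 : 1 ≤ (Finset.univ \ T).card := Finset.card_pos.mpr ⟨i, hmem⟩
          omega
        · rw [Finset.card_insert_of_notMem hiT, pow_succ]
          calc rho μ (fun j : (insert i T : Finset (Fin n)) => v j.1)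
              ≤ (1 - μ / 2) * rho μ (fun j : T => v j.1) := hstep
            _ ≤ (1 - μ / 2) * (1 - μ / 2) ^ T.card := by
                apply mul_le_mul_of_nonneg_left hrho
                linarith
            _ = (1 - μ / 2) ^ T.card * (1 - μ / 2) := by ring
  -- start with the empty set
  have hempty : rho μ (fun j : (∅ : Finset (Fin n)) => v j.1)
      ≤ (1 - μ / 2) ^ (∅ : Finset (Fin n)).card := by
    haveI : IsEmpty {x // x ∈ (∅ : Finset (Fin n))} := ⟨fun x => Finset.notMem_empty _ x.2⟩
    rw [rho_res_eq μ hμ0' hμ4 v ∅, probX_of_isEmpty]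
    simp
  obtain ⟨T, hTgood, hTrho⟩ := greedy n ∅ (by simp) hempty
  refine ⟨T, hTgood, hTrho, ?_⟩
  -- the cardinality bound
  have hρpos : 0 < rho μ v := rho_pos μ hμ0' (by linarith) v
  have hρle : rho μ v ≤ (1 - μ / 2) ^ T.card :=
    (rho_le_rho_res μ hμ0' hμ1 v T).trans hTrho
  have hbase : (0 : ℝ) < 1 - μ / 2 := by linarith
  have hlog1 : Real.log (rho μ v) ≤ (T.card : ℝ) * Real.log (1 - μ / 2) := by
    calc Real.log (rho μ v) ≤ Real.log ((1 - μ / 2) ^ T.card) := Real.log_le_log hρpos hρle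
      _ = (T.card : ℝ) * Real.log (1 - μ / 2) := by rw [Real.log_pow]
  have hlog2 : Real.log (1 - μ / 2) ≤ -(μ / 2) := by
    have := Real.log_le_sub_one_of_pos hbase
    linarith
  have hlog3 : Real.log (rho μ v) ≤ (T.card : ℝ) * (-(μ / 2)) := by
    calc Real.log (rho μ v) ≤ (T.card : ℝ) * Real.log (1 - μ / 2) := hlog1
      _ ≤ (T.card : ℝ) * (-(μ / 2)) := by
          apply mul_le_mul_of_nonneg_left hlog2
          positivity
  rw [Real.log_inv, div_mul_eq_mul_div, le_div_iff₀ hμ0]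
  linarith
end

section
/- Let μ ∈ (0, 1/4], let n be a positive integer, let p be a prime, and let v ∈ (ℤ/pℤ)^n. Set d = (2/μ)·log(1/ρ_μ(v)) and let k be a positive integer with k·d ≤ n. Then there exist T ⊆ S ⊆ [n] with |T| ≤ d and |S| ≤ k·d such that v_i ∈ N_μ(v_T) for all i ∉ S, and ρ_μ(v_S) ≤ ρ_μ(v_T^k). -/
open Finset

namespace LO

variable {p : ℕ} [NeZero p]

/-- abbreviation for the standard additive character -/
noncomputable abbrev ψ (p : ℕ) [NeZero p] : AddChar (ZMod p) ℂ := ZMod.stdAddChar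

/-- the real "Fourier multiplier" of one step -/
noncomputable def g (μ : ℝ) {p : ℕ} [NeZero p] (a : ZMod p) : ℝ :=
  1 - μ + μ * (ψ p a).re

lemma psi_abs (a : ZMod p) : ‖ψ p a‖ = 1 := by
  rw [ZMod.stdAddChar_apply]; exact Circle.norm_coe _

lemma psi_re_le_one (a : ZMod p) : (ψ p a).re ≤ 1 := by
  have := Complex.abs_re_le_norm (ψ p a)
  rw [psi_abs] at this
  exact (abs_le.mp this).2

lemma psi_re_ge (a : ZMod p) : -1 ≤ (ψ p a).re := by
  have := Complex.abs_re_le_norm (ψ p a)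
  rw [psi_abs] at this
  exact (abs_le.mp this).1

lemma psi_neg (a : ZMod p) : ψ p (-a) = starRingEnd ℂ (ψ p a) := by
  rw [AddChar.map_neg_eq_inv, ZMod.stdAddChar_apply,
    ← Circle.coe_inv, Circle.coe_inv_eq_conj]

lemma g_pos {μ : ℝ} (hμ0 : 0 < μ) (hμ : μ ≤ 1 / 4) (a : ZMod p) : 0 < g μ a := by
  have h := psi_re_ge a
  have : 1 - 2 * μ ≤ g μ a := by
    unfold g; nlinarith
  linarith

lemma g_le_one {μ : ℝ} (hμ0 : 0 ≤ μ) (a : ZMod p) : g μ a ≤ 1 := by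
  have h := psi_re_le_one a
  unfold g; nlinarith

lemma psi_sum {ι : Type*} (s : Finset ι) (f : ι → ZMod p) :
    ψ p (∑ i ∈ s, f i) = ∏ i ∈ s, ψ p (f i) := by
  classical
  induction s using Finset.cons_induction with
  | empty => simp [AddChar.map_zero_eq_one]
  | cons i s hi ih => rw [Finset.sum_cons, Finset.prod_cons, AddChar.map_add_eq_mul, ih]

lemma orth (a : ZMod p) : ∑ ξ : ZMod p, ψ p (ξ * a) = if a = 0 then (p : ℂ) else 0 := by
  have : ∀ ξ : ZMod p, ψ p (ξ * a) = AddChar.mulShift (ψ p) a ξ := by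
    intro ξ; rw [AddChar.mulShift_apply, mul_comm]
  simp_rw [this]
  split_ifs with h
  · subst h; simp [AddChar.mulShift_apply, AddChar.map_zero_eq_one, Finset.card_univ]
  · exact AddChar.sum_eq_zero_of_ne_one (ZMod.isPrimitive_stdAddChar p h)

end LO

namespace LO2
open LO

variable {p : ℕ} [NeZero p] {ι : Type} [Fintype ι] [DecidableEq ι]

lemma hgc (μ : ℝ) (a : ZMod p) :
    ((g μ a : ℝ) : ℂ) = (1 - (μ:ℂ)) + (μ:ℂ)/2 * ψ p a + (μ:ℂ)/2 * ψ p (-a) := by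
  have h := Complex.add_conj (ψ p a)
  rw [psi_neg]
  unfold g
  push_cast at h ⊢
  linear_combination (-(μ:ℂ)/2) * h

lemma fourier (μ : ℝ) (w : ι → ZMod p) (x : ZMod p) :
    ((probX μ w x : ℝ) : ℂ) * p =
      ∑ ξ : ZMod p, (∏ i, ((g μ (ξ * w i) : ℝ) : ℂ)) * ψ p (-(ξ * x)) := by
  unfold probX
  push_cast [apply_ite (Complex.ofReal : ℝ → ℂ)]
  rw [Finset.sum_mul]
  have step1 : ∀ ε : ι → ({-1,0,1} : Finset ℤ),
      ((∏ i, (if (ε i : ℤ) = 0 then 1-(μ:ℂ) else (μ:ℂ)/2)) *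
        (if (∑ i, ((ε i : ℤ) : ZMod p) * w i) = x then (1:ℂ) else 0)) * p
      = ∑ ξ : ZMod p, ψ p (-(ξ*x)) *
          ∏ i, ((if (ε i : ℤ) = 0 then 1-(μ:ℂ) else (μ:ℂ)/2) *
            ψ p (ξ * (((ε i : ℤ) : ZMod p) * w i))) := by
    intro ε
    set A := ∑ i, ((ε i : ℤ) : ZMod p) * w i with hA
    have h2 : (if A = x then (1:ℂ) else 0) * p = ∑ ξ : ZMod p, ψ p (ξ * (A - x)) := by
      rw [orth]
      rcases eq_or_ne A x with h | h
      · simp [h]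
      · rw [if_neg h, if_neg (by simpa [sub_eq_zero] using h), zero_mul]
    rw [mul_assoc, h2, Finset.mul_sum]
    refine Finset.sum_congr rfl fun ξ _ => ?_
    have h3 : ψ p (ξ * (A - x)) = (∏ i, ψ p (ξ * (((ε i : ℤ) : ZMod p) * w i))) * ψ p (-(ξ*x)) := by
      rw [mul_sub, sub_eq_add_neg, AddChar.map_add_eq_mul, hA, Finset.mul_sum, psi_sum]
    rw [h3, Finset.prod_mul_distrib]
    ring
  rw [Finset.sum_congr rfl fun ε _ => step1 ε, Finset.sum_comm]
  refine Finset.sum_congr rfl fun ξ _ => ?_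
  rw [← Finset.mul_sum]
  have swap : ∑ ε : ι → ({-1,0,1} : Finset ℤ),
      ∏ i, ((if (ε i : ℤ) = 0 then 1-(μ:ℂ) else (μ:ℂ)/2) *
        ψ p (ξ * (((ε i : ℤ) : ZMod p) * w i)))
      = ∏ i, ∑ e : ({-1,0,1} : Finset ℤ),
          ((if (e : ℤ) = 0 then 1-(μ:ℂ) else (μ:ℂ)/2) *
            ψ p (ξ * (((e : ℤ) : ZMod p) * w i))) := by
    rw [Finset.prod_univ_sum]
    rw [Fintype.piFinset_univ]
  rw [swap]
  have step3 : ∀ i, (∑ e : ({-1,0,1} : Finset ℤ),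
      ((if (e : ℤ) = 0 then 1-(μ:ℂ) else (μ:ℂ)/2) *
        ψ p (ξ * (((e : ℤ) : ZMod p) * w i)))) = ((g μ (ξ * w i) : ℝ) : ℂ) := by
    intro i
    rw [Finset.sum_coe_sort _ (fun e : ℤ => (if e = 0 then 1-(μ:ℂ) else (μ:ℂ)/2) *
        ψ p (ξ * ((e : ZMod p) * w i)))]
    rw [show ({-1,0,1} : Finset ℤ) = insert (-1) (insert 0 {1}) from rfl]
    rw [Finset.sum_insert (by decide), Finset.sum_insert (by decide), Finset.sum_singleton]
    rw [hgc]
    norm_num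
    ring
  rw [Finset.prod_congr rfl fun i _ => step3 i]
  ring

lemma probX_eq (μ : ℝ) (w : ι → ZMod p) (x : ZMod p) :
    probX μ w x = (p:ℝ)⁻¹ * ∑ ξ : ZMod p,
      (∏ i, g μ (ξ * w i)) * (ψ p (ξ * x)).re := by
  have hp : (p:ℝ) ≠ 0 := Nat.cast_ne_zero.mpr (NeZero.ne p)
  have h2 : (probX μ w x) * p = ∑ ξ : ZMod p,
      (∏ i, g μ (ξ * w i)) * (ψ p (ξ * x)).re := by
    calc (probX μ w x) * p = (((probX μ w x : ℝ) : ℂ) * (p:ℂ)).re := by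
          rw [← Complex.ofReal_natCast, ← Complex.ofReal_mul, Complex.ofReal_re]
      _ = (∑ ξ : ZMod p, (∏ i, ((g μ (ξ * w i) : ℝ) : ℂ)) * ψ p (-(ξ * x))).re := by
          rw [fourier]
      _ = ∑ ξ : ZMod p, (∏ i, g μ (ξ * w i)) * (ψ p (ξ * x)).re := by
          rw [Complex.re_sum]
          refine Finset.sum_congr rfl fun ξ _ => ?_
          rw [← Complex.ofReal_prod, Complex.re_ofReal_mul, psi_neg, Complex.conj_re]
  rw [← h2]
  field_simp

lemma probX_zero (μ : ℝ) (w : ι → ZMod p) :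
    probX μ w 0 = (p:ℝ)⁻¹ * ∑ ξ : ZMod p, ∏ i, g μ (ξ * w i) := by
  rw [probX_eq]
  simp [AddChar.map_zero_eq_one]

lemma probX_le {μ : ℝ} (hμ0 : 0 < μ) (hμ : μ ≤ 1/4) (w : ι → ZMod p) (x : ZMod p) :
    probX μ w x ≤ probX μ w 0 := by
  rw [probX_eq, probX_zero]
  refine mul_le_mul_of_nonneg_left (Finset.sum_le_sum fun ξ _ => ?_) (by positivity)
  have hnn : 0 ≤ ∏ i, g μ (ξ * w i) :=
    Finset.prod_nonneg fun i _ => (g_pos hμ0 hμ _).le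
  calc (∏ i, g μ (ξ * w i)) * (ψ p (ξ * x)).re
      ≤ (∏ i, g μ (ξ * w i)) * 1 := by
        exact mul_le_mul_of_nonneg_left (psi_re_le_one _) hnn
    _ = ∏ i, g μ (ξ * w i) := mul_one _

end LO2

namespace LO3
open LO LO2

variable {p : ℕ} [NeZero p] {n : ℕ}

/-- `Φ μ v A = (1/p) ∑_ξ ∏_{i∈A} g(ξ v_i)`, the Fourier form of `P(X(v_A)=0)`. -/
noncomputable def Phi (μ : ℝ) (v : Fin n → ZMod p) (A : Finset (Fin n)) : ℝ :=
  (p:ℝ)⁻¹ * ∑ ξ : ZMod p, ∏ i ∈ A, g μ (ξ * v i)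

/-- `Ψ k μ v A = (1/p) ∑_ξ (∏_{i∈A} g(ξ v_i))^k`. -/
noncomputable def Psi (k : ℕ) (μ : ℝ) (v : Fin n → ZMod p) (A : Finset (Fin n)) : ℝ :=
  (p:ℝ)⁻¹ * ∑ ξ : ZMod p, (∏ i ∈ A, g μ (ξ * v i)) ^ k

variable {μ : ℝ} (v : Fin n → ZMod p)

lemma probX_restrict (A : Finset (Fin n)) :
    probX μ (fun j : A => v j.1) 0 = Phi μ v A := by
  rw [probX_zero, Phi]
  refine congrArg _ (Finset.sum_congr rfl fun ξ _ => ?_)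
  exact Finset.prod_coe_sort A (fun i => g μ (ξ * v i))

lemma probX_restrict_x (A : Finset (Fin n)) (x : ZMod p) :
    probX μ (fun j : A => v j.1) x =
      (p:ℝ)⁻¹ * ∑ ξ : ZMod p, (∏ i ∈ A, g μ (ξ * v i)) * (ψ p (ξ * x)).re := by
  rw [probX_eq]
  refine congrArg _ (Finset.sum_congr rfl fun ξ _ => ?_)
  rw [Finset.prod_coe_sort A (fun i => g μ (ξ * v i))]

lemma probX_pow (T : Finset (Fin n)) (k : ℕ) :
    probX μ (fun x : T × Fin k => v x.1.1) 0 = Psi k μ v T := by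
  rw [probX_zero, Psi]
  refine congrArg _ (Finset.sum_congr rfl fun ξ _ => ?_)
  rw [Fintype.prod_prod_type (fun x : T × Fin k => g μ (ξ * v x.1.1))]
  simp only [Finset.prod_const, Finset.card_univ, Fintype.card_fin]
  rw [Finset.prod_pow, Finset.prod_coe_sort T (fun i => g μ (ξ * v i))]

lemma Phi_empty : Phi μ v ∅ = 1 := by
  have hp : (p:ℝ) ≠ 0 := Nat.cast_ne_zero.mpr (NeZero.ne p)
  simp [Phi, Finset.card_univ, ZMod.card]

variable (hμ0 : 0 < μ) (hμ : μ ≤ 1/4)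
include hμ0 hμ

lemma Phi_pos (A : Finset (Fin n)) : 0 < Phi μ v A := by
  have hp : (0:ℝ) < p := by
    exact_mod_cast Nat.pos_of_ne_zero (NeZero.ne p)
  refine mul_pos (by positivity) (Finset.sum_pos (fun ξ _ => ?_) ⟨0, Finset.mem_univ 0⟩)
  exact Finset.prod_pos fun i _ => g_pos hμ0 hμ _

lemma Phi_mono {A B : Finset (Fin n)} (hAB : A ⊆ B) : Phi μ v B ≤ Phi μ v A := by
  refine mul_le_mul_of_nonneg_left (Finset.sum_le_sum fun ξ _ => ?_) (by positivity)
  rw [← Finset.prod_sdiff hAB]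
  have h1 : ∏ i ∈ B \ A, g μ (ξ * v i) ≤ 1 :=
    Finset.prod_le_one (fun i _ => (g_pos hμ0 hμ _).le) (fun i _ => g_le_one hμ0.le _)
  have h2 : 0 ≤ ∏ i ∈ A, g μ (ξ * v i) :=
    Finset.prod_nonneg fun i _ => (g_pos hμ0 hμ _).le
  calc (∏ i ∈ B \ A, g μ (ξ * v i)) * ∏ i ∈ A, g μ (ξ * v i)
      ≤ 1 * ∏ i ∈ A, g μ (ξ * v i) := mul_le_mul_of_nonneg_right h1 h2
    _ = ∏ i ∈ A, g μ (ξ * v i) := one_mul _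

omit hμ0 hμ in
lemma Phi_insert {A : Finset (Fin n)} {i : Fin n} (hi : i ∉ A) :
    Phi μ v (insert i A) = (1 - μ) * Phi μ v A + μ * probX μ (fun j : A => v j.1) (v i) := by
  rw [probX_restrict_x, Phi, Phi]
  have key : ∀ ξ : ZMod p, ∏ j ∈ insert i A, g μ (ξ * v j) =
      (1-μ) * (∏ j ∈ A, g μ (ξ * v j)) +
        μ * ((∏ j ∈ A, g μ (ξ * v j)) * (ψ p (ξ * v i)).re) := by
    intro ξ
    rw [Finset.prod_insert hi]
    unfold g
    ring
  rw [Finset.sum_congr rfl fun ξ _ => key ξ, Finset.sum_add_distrib, ← Finset.mul_sum,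
    ← Finset.mul_sum]
  ring

lemma greedy (B : Finset (Fin n)) :
    ∃ T : Finset (Fin n), Disjoint T B ∧ Phi μ v T ≤ (1 - μ/2) ^ T.card ∧
      ∀ i, i ∉ B → i ∉ T →
        probX μ (fun j : T => v j.1) (v i) > probX μ (fun j : T => v j.1) 0 / 2 := by
  classical
  set 𝒮 : Finset (Finset (Fin n)) :=
    Finset.univ.filter (fun T => Disjoint T B ∧ Phi μ v T ≤ (1 - μ/2) ^ T.card) with h𝒮
  have hemp : ∅ ∈ 𝒮 := by
    simp [h𝒮, Phi_empty]
  obtain ⟨T, hT𝒮, hTmax⟩ := Finset.exists_max_image 𝒮 Finset.card ⟨∅, hemp⟩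
  rw [h𝒮, Finset.mem_filter] at hT𝒮
  refine ⟨T, hT𝒮.2.1, hT𝒮.2.2, fun i hiB hiT => ?_⟩
  by_contra hcon
  push_neg at hcon
  rw [probX_restrict] at hcon
  have hΦT := hT𝒮.2.2
  have hins : insert i T ∈ 𝒮 := by
    rw [h𝒮, Finset.mem_filter]
    refine ⟨Finset.mem_univ _, ?_, ?_⟩
    · rw [Finset.disjoint_left]
      intro a ha
      rcases Finset.mem_insert.mp ha with h | h
      · subst h; exact hiB
      · exact Finset.disjoint_left.mp hT𝒮.2.1 h
    · rw [Phi_insert v hiT]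
      calc (1-μ) * Phi μ v T + μ * probX μ (fun j : T => v j.1) (v i)
          ≤ (1-μ) * Phi μ v T + μ * (Phi μ v T / 2) := by
            exact add_le_add_right (mul_le_mul_of_nonneg_left hcon hμ0.le) _
        _ = (1 - μ/2) * Phi μ v T := by ring
        _ ≤ (1 - μ/2) * (1 - μ/2) ^ T.card :=
            mul_le_mul_of_nonneg_left hΦT (by linarith)
        _ = (1 - μ/2) ^ (insert i T).card := by
            rw [Finset.card_insert_of_notMem hiT, pow_succ, mul_comm]
  have hle := hTmax _ hins
  rw [Finset.card_insert_of_notMem hiT] at hle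
  omega

lemma card_bound {T : Finset (Fin n)} (hT : Phi μ v T ≤ (1 - μ/2) ^ T.card) :
    (T.card : ℝ) * (μ/2) ≤ Real.log (Phi μ v Finset.univ)⁻¹ := by
  have hr : 0 < Phi μ v Finset.univ := Phi_pos v hμ0 hμ _
  have h1 : Phi μ v Finset.univ ≤ (1 - μ/2)^T.card :=
    le_trans (Phi_mono v hμ0 hμ (Finset.subset_univ T)) hT
  have hc : (0:ℝ) < 1 - μ/2 := by linarith
  have h2 : Real.log (Phi μ v Finset.univ) ≤ T.card * Real.log (1 - μ/2) := by
    calc Real.log (Phi μ v Finset.univ) ≤ Real.log ((1 - μ/2)^T.card) :=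
          Real.log_le_log hr h1
      _ = T.card * Real.log (1 - μ/2) := Real.log_pow _ _
  have h3 : Real.log (1 - μ/2) ≤ -(μ/2) := by
    have := Real.log_le_sub_one_of_pos hc
    linarith
  have ht0 : (0:ℝ) ≤ (T.card : ℝ) := Nat.cast_nonneg _
  rw [Real.log_inv]
  nlinarith

end LO3

namespace LO4
open LO LO2 LO3

variable {p : ℕ} [NeZero p] {n : ℕ} {μ : ℝ} (v : Fin n → ZMod p)
variable (hμ0 : 0 < μ) (hμ : μ ≤ 1/4)
include hμ0 hμ

lemma iter (k : ℕ) : ∃ Ts : Fin k → Finset (Fin n),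
    (∀ j j', j ≠ j' → Disjoint (Ts j) (Ts j')) ∧
    (∀ j, Phi μ v (Ts j) ≤ (1 - μ/2) ^ (Ts j).card) ∧
    (∀ j i, (∀ j', i ∉ Ts j') →
      probX μ (fun l : Ts j => v l.1) (v i) > probX μ (fun l : Ts j => v l.1) 0 / 2) := by
  induction k with
  | zero => exact ⟨Fin.elim0, fun j => j.elim0, fun j => j.elim0, fun j => j.elim0⟩
  | succ k ih =>
    obtain ⟨Ts, hdisj, hPhi, hnb⟩ := ih
    obtain ⟨T₀, hT₀B, hT₀Phi, hT₀nb⟩ := greedy v hμ0 hμ (Finset.univ.biUnion Ts)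
    refine ⟨Fin.cons T₀ Ts, ?_, ?_, ?_⟩
    · intro j j' hne
      induction j using Fin.cases with
      | zero =>
        induction j' using Fin.cases with
        | zero => exact absurd rfl hne
        | succ j' =>
          simp only [Fin.cons_zero, Fin.cons_succ]
          exact hT₀B.mono_right (Finset.subset_biUnion_of_mem Ts (Finset.mem_univ j'))
      | succ j =>
        induction j' using Fin.cases with
        | zero =>
          simp only [Fin.cons_zero, Fin.cons_succ]
          exact (hT₀B.mono_right
            (Finset.subset_biUnion_of_mem Ts (Finset.mem_univ j))).symm
        | succ j' =>
          simp only [Fin.cons_succ]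
          exact hdisj j j' (fun h => hne (by rw [h]))
    · intro j
      induction j using Fin.cases with
      | zero => exact hT₀Phi
      | succ j => exact hPhi j
    · intro j i hi
      have hi' : ∀ j', i ∉ Ts j' := fun j' => by
        have := hi j'.succ
        rwa [Fin.cons_succ] at this
      induction j using Fin.cases with
      | zero =>
        have hiB : i ∉ Finset.univ.biUnion Ts := by
          simp only [Finset.mem_biUnion, Finset.mem_univ, true_and, not_exists]
          exact hi'
        have hiT₀ : i ∉ T₀ := by
          have := hi 0
          rwa [Fin.cons_zero] at this
        exact hT₀nb i hiB hiT₀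
      | succ j => exact hnb j i hi'

end LO4


namespace LO5
open LO LO2 LO3 LO4

lemma rho_eq {p : ℕ} [NeZero p] {ι : Type} [Fintype ι] [DecidableEq ι]
    {μ : ℝ} (hμ0 : 0 < μ) (hμ : μ ≤ 1/4) (w : ι → ZMod p) :
    rho μ w = probX μ w 0 := by
  refine le_antisymm (ciSup_le fun x => probX_le hμ0 hμ w x) ?_
  exact le_ciSup (Set.Finite.bddAbove (Set.finite_range _)) 0

theorem main
    (μ : ℝ) (hμ : μ ∈ Set.Ioc (0 : ℝ) (1 / 4)) (n p : ℕ) (hn : 0 < n)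
    [Fact p.Prime] (v : Fin n → ZMod p) (d : ℝ)
    (hd : d = 2 / μ * Real.log (rho μ v)⁻¹)
    (k : ℕ) (hk : 0 < k) (hkd : (k : ℝ) * d ≤ n) :
    ∃ T S : Finset (Fin n), T ⊆ S ∧ (T.card : ℝ) ≤ d ∧ (S.card : ℝ) ≤ k * d ∧
      (∀ i ∉ S, v i ∈ nbhd μ (fun j : T => v j.1)) ∧
      rho μ (fun j : S => v j.1) ≤ rho μ (fun x : T × Fin k => v x.1.1) := by
  obtain ⟨hμ0, hμ4⟩ := hμ
  have hk' : (k:ℝ) ≠ 0 := Nat.cast_ne_zero.mpr hk.ne'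
  obtain ⟨Ts, hdisj, hPhi, hnb⟩ := iter v hμ0 hμ4 k
  set S : Finset (Fin n) := Finset.univ.biUnion Ts with hS
  obtain ⟨jm, _, hjmax⟩ := Finset.exists_max_image (Finset.univ : Finset (Fin k))
    (fun j => Psi k μ v (Ts j)) ⟨⟨0, hk⟩, Finset.mem_univ _⟩
  set T : Finset (Fin n) := Ts jm with hT
  -- rho μ v = Phi μ v univ
  have hrho : rho μ v = Phi μ v Finset.univ := by
    rw [rho_eq hμ0 hμ4, probX_zero, Phi]
  -- each block has small cardinality
  have hcard : ∀ j, ((Ts j).card : ℝ) ≤ d := by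
    intro j
    have h := card_bound v hμ0 hμ4 (hPhi j)
    rw [← hrho] at h
    rw [hd]
    calc ((Ts j).card : ℝ) = ((Ts j).card * (μ/2)) * (2/μ) := by
          field_simp
      _ ≤ Real.log (rho μ v)⁻¹ * (2/μ) :=
          mul_le_mul_of_nonneg_right h (by positivity)
      _ = 2/μ * Real.log (rho μ v)⁻¹ := mul_comm _ _
  refine ⟨T, S, Finset.subset_biUnion_of_mem Ts (Finset.mem_univ jm), hcard jm, ?_, ?_, ?_⟩
  · -- |S| ≤ k d
    have hScard : S.card = ∑ j : Fin k, (Ts j).card :=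
      Finset.card_biUnion fun x _ y _ hxy => hdisj x y hxy
    rw [hScard]
    push_cast
    calc ∑ j : Fin k, ((Ts j).card : ℝ) ≤ ∑ _j : Fin k, d :=
          Finset.sum_le_sum fun j _ => hcard j
      _ = k * d := by rw [Finset.sum_const, Finset.card_univ, Fintype.card_fin, nsmul_eq_mul]
  · -- neighbourhood condition
    intro i hiS
    have hi' : ∀ j', i ∉ Ts j' := by
      intro j' hmem
      exact hiS (Finset.mem_biUnion.mpr ⟨j', Finset.mem_univ j', hmem⟩)
    have := hnb jm i hi'
    simp only [nbhd, Finset.mem_filter, Finset.mem_univ, true_and]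
    exact this
  · -- the main inequality via AM-GM
    rw [rho_eq hμ0 hμ4, rho_eq hμ0 hμ4, probX_restrict, probX_pow]
    set F : Fin k → ZMod p → ℝ := fun j ξ => ∏ i ∈ Ts j, g μ (ξ * v i) with hF
    have hFnn : ∀ j ξ, 0 ≤ F j ξ := fun j ξ =>
      Finset.prod_nonneg fun i _ => (g_pos hμ0 hμ4 _).le
    have hsplit : ∀ ξ : ZMod p, ∏ i ∈ S, g μ (ξ * v i) = ∏ j : Fin k, F j ξ := by
      intro ξ
      exact Finset.prod_biUnion fun x _ y _ hxy => hdisj x y hxy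
    have hAMGM : ∀ ξ : ZMod p, ∏ j : Fin k, F j ξ ≤ ∑ j : Fin k, (k:ℝ)⁻¹ * F j ξ ^ k := by
      intro ξ
      have h := Real.geom_mean_le_arith_mean_weighted Finset.univ
        (fun _ => (k:ℝ)⁻¹) (fun j => F j ξ ^ k)
        (fun j _ => by positivity)
        (by rw [Finset.sum_const, Finset.card_univ, Fintype.card_fin, nsmul_eq_mul]
            field_simp)
        (fun j _ => pow_nonneg (hFnn j ξ) k)
      calc ∏ j : Fin k, F j ξ = ∏ j : Fin k, (F j ξ ^ k) ^ ((k:ℝ)⁻¹) := by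
            refine Finset.prod_congr rfl fun j _ => ?_
            rw [← Real.rpow_natCast (F j ξ) k, ← Real.rpow_mul (hFnn j ξ),
              mul_inv_cancel₀ hk', Real.rpow_one]
        _ ≤ ∑ j : Fin k, (k:ℝ)⁻¹ * F j ξ ^ k := h
    have hp : (0:ℝ) ≤ (p:ℝ)⁻¹ := by positivity
    calc Phi μ v S = (p:ℝ)⁻¹ * ∑ ξ : ZMod p, ∏ j : Fin k, F j ξ := by
          rw [Phi]
          exact congrArg _ (Finset.sum_congr rfl fun ξ _ => hsplit ξ)
      _ ≤ (p:ℝ)⁻¹ * ∑ ξ : ZMod p, ∑ j : Fin k, (k:ℝ)⁻¹ * F j ξ ^ k :=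
          mul_le_mul_of_nonneg_left (Finset.sum_le_sum fun ξ _ => hAMGM ξ) hp
      _ = (k:ℝ)⁻¹ * ∑ j : Fin k, (p:ℝ)⁻¹ * ∑ ξ : ZMod p, F j ξ ^ k := by
          rw [Finset.sum_comm]
          rw [Finset.mul_sum, Finset.mul_sum]
          refine Finset.sum_congr rfl fun j _ => ?_
          rw [Finset.mul_sum, Finset.mul_sum, Finset.mul_sum]
          refine Finset.sum_congr rfl fun ξ _ => ?_
          ring
      _ = (k:ℝ)⁻¹ * ∑ j : Fin k, Psi k μ v (Ts j) := rfl
      _ ≤ (k:ℝ)⁻¹ * ∑ _j : Fin k, Psi k μ v T := by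
          refine mul_le_mul_of_nonneg_left
            (Finset.sum_le_sum fun j _ => hjmax j (Finset.mem_univ j)) (by positivity)
      _ = Psi k μ v T := by
          rw [Finset.sum_const, Finset.card_univ, Fintype.card_fin, nsmul_eq_mul]
          field_simp

end LO5


/-- **Lemma 2.2.** Let `μ ∈ (0, 1/4]`, `n ≥ 1`, `p` prime and `v ∈ (ℤ/pℤ)ⁿ`. Set
`d = (2/μ) log(1/ρ_μ(v))` and let `k ≥ 1` satisfy `kd ≤ n`. Then there are `T ⊆ S ⊆ [n]` with
`|T| ≤ d`, `|S| ≤ kd`, such that `vᵢ ∈ N_μ(v_T)` for all `i ∉ S`, and `ρ_μ(v_S) ≤ ρ_μ(v_T^k)`,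
where `v_T^k` is the concatenation of `k` copies of `v_T`. -/
theorem iterated_greedy_inverse_littlewood_offord
    (μ : ℝ) (hμ : μ ∈ Set.Ioc (0 : ℝ) (1 / 4)) (n p : ℕ) (hn : 0 < n)
    [Fact p.Prime] (v : Fin n → ZMod p) (d : ℝ)
    (hd : d = 2 / μ * Real.log (rho μ v)⁻¹)
    (k : ℕ) (hk : 0 < k) (hkd : (k : ℝ) * d ≤ n) :
    ∃ T S : Finset (Fin n), T ⊆ S ∧ (T.card : ℝ) ≤ d ∧ (S.card : ℝ) ≤ k * d ∧
      (∀ i ∉ S, v i ∈ nbhd μ (fun j : T => v j.1)) ∧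
      rho μ (fun j : S => v j.1) ≤ rho μ (fun x : T × Fin k => v x.1.1) := by
  exact LO5.main μ hμ n p hn v d hd k hk hkd
end

section
/- Let μ ∈ (0, 1/4], let p be a prime, and let v be a finite tuple over ℤ/pℤ with at least one nonzero coordinate. Then ρ_μ(v) ≤ 64/√(μ·|v|) + 1/p, where |v| is the number of nonzero coordinates of v. -/
open Finset

namespace RhoAux

noncomputable def g {p : ℕ} [NeZero p] (μ : ℝ) (a : ZMod p) : ℝ :=
  1 - μ + μ * Real.cos (2 * Real.pi * a.val / p)

variable {p : ℕ} [NeZero p]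

lemma g_nonneg {μ : ℝ} (hμ0 : 0 ≤ μ) (hμ : μ ≤ 1 / 4) (a : ZMod p) : 0 ≤ g μ a := by
  have h := Real.neg_one_le_cos (2 * Real.pi * a.val / p)
  unfold g; nlinarith

lemma g_zero (μ : ℝ) : g μ (0 : ZMod p) = 1 := by
  unfold g
  rw [ZMod.val_zero]
  push_cast
  rw [mul_zero, zero_div, Real.cos_zero]
  ring

/-- key trig bound: `cos (2πt) ≤ 1 - 4 t²` for `0 < t ≤ 1/2`. -/
lemma cos_le (t : ℝ) (ht0 : 0 < t) (ht : t ≤ 1 / 2) :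
    Real.cos (2 * Real.pi * t) ≤ 1 - 4 * t ^ 2 := by
  have hπ3 : (3 : ℝ) < Real.pi := Real.pi_gt_three
  have hπ4 : Real.pi ≤ 4 := by linarith [Real.pi_lt_d2]
  rcases le_or_gt (Real.pi * t) 1 with h | h
  · have hs := Real.sin_gt_sub_cube (by positivity : 0 < Real.pi * t)
    have hx0 : (0:ℝ) ≤ Real.pi * t := by positivity
    have hcube' : (Real.pi * t) ^ 3 ≤ (Real.pi * t) ^ 1 :=
      pow_le_pow_of_le_one hx0 h (by norm_num)
    have hcube : (Real.pi * t) ^ 3 / 4 ≤ (Real.pi * t) / 4 := by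
      rw [pow_one] at hcube'; linarith
    have hsin : 9 / 4 * t ≤ Real.sin (Real.pi * t) := by nlinarith
    have hcos : Real.cos (2 * Real.pi * t) = 1 - 2 * Real.sin (Real.pi * t) ^ 2 := by
      have h2 : 2 * Real.pi * t = 2 * (Real.pi * t) := by ring
      rw [h2, Real.cos_two_mul, ← Real.sin_sq_add_cos_sq (Real.pi * t)]
      ring
    rw [hcos]
    nlinarith
  · have hcos : Real.cos (2 * Real.pi * t) ≤ 0 := by
      apply Real.cos_nonpos_of_pi_div_two_le_of_le <;> nlinarith
    nlinarith

lemma g_le_exp {μ : ℝ} (hμ0 : 0 < μ) {a : ZMod p} (hp : 1 < p) (ha : a ≠ 0) :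
    g μ a ≤ Real.exp (-(4 * μ * ((min a.val (p - a.val) : ℕ) / p : ℝ) ^ 2)) := by
  have hp0 : (0 : ℝ) < p := by positivity
  have hvlt : a.val < p := ZMod.val_lt a
  have hv1 : 1 ≤ a.val := Nat.one_le_iff_ne_zero.2 fun h => ha (by
    rw [← ZMod.natCast_zmod_val a, h, Nat.cast_zero])
  set k : ℕ := min a.val (p - a.val) with hk
  have hk1 : 1 ≤ k := le_min hv1 (by omega)
  have hk2 : 2 * k ≤ p := by omega
  set t : ℝ := (k : ℝ) / p with htdef
  have ht0 : 0 < t := by positivity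
  have ht : t ≤ 1 / 2 := by
    rw [div_le_div_iff₀ hp0 (by norm_num)]
    push_cast
    have : (2 : ℝ) * k ≤ p := by exact_mod_cast hk2
    linarith
  have hcos_eq : Real.cos (2 * Real.pi * a.val / p) = Real.cos (2 * Real.pi * t) := by
    rcases le_or_gt a.val (p - a.val) with h | h
    · rw [htdef, hk, min_eq_left h]; ring_nf
    · rw [htdef, hk, min_eq_right h.le]
      have hcast : ((p - a.val : ℕ) : ℝ) = (p : ℝ) - a.val := by
        rw [Nat.cast_sub hvlt.le]
      have harg : 2 * Real.pi * (((p - a.val : ℕ) : ℝ) / p)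
          = 2 * Real.pi - 2 * Real.pi * a.val / p := by
        rw [hcast]; field_simp
      rw [harg, Real.cos_two_pi_sub]
  have hbound := cos_le t ht0 ht
  have hexp := Real.add_one_le_exp (-(4 * μ * t ^ 2))
  unfold g
  rw [hcos_eq]
  nlinarith

end RhoAux

namespace RhoAux

lemma addChar_map_sum {A M : Type*} [AddCommMonoid A] [CommMonoid M] {ι : Type*}
    (ψ : AddChar A M) (s : Finset ι) (f : ι → A) :
    ψ (∑ i ∈ s, f i) = ∏ i ∈ s, ψ (f i) := by
  induction s using Finset.cons_induction with
  | empty => simp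
  | cons a s ha ih => rw [Finset.sum_cons, Finset.prod_cons, AddChar.map_add_eq_mul, ih]

variable {p : ℕ} [NeZero p]

lemma char_pair (a : ZMod p) :
    ZMod.stdAddChar a + ZMod.stdAddChar (-a)
      = ((2 * Real.cos (2 * Real.pi * a.val / p) : ℝ) : ℂ) := by
  have h1 : ZMod.stdAddChar a
      = Complex.exp (((2 * Real.pi * a.val / p : ℝ) : ℂ) * Complex.I) := by
    rw [ZMod.stdAddChar_apply, ZMod.toCircle_apply]
    push_cast
    ring_nf
  have h2 : ZMod.stdAddChar (-a) = (ZMod.stdAddChar a)⁻¹ := AddChar.map_neg_eq_inv _ a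
  rw [h2, h1, ← Complex.exp_neg, ← neg_mul, Complex.exp_mul_I, Complex.exp_mul_I]
  rw [Complex.cos_neg, Complex.sin_neg]
  rw [← Complex.ofReal_cos]
  push_cast
  ring

lemma orth [Fact p.Prime] (y : ZMod p) :
    ∑ ξ : ZMod p, ZMod.stdAddChar (ξ * y) = if y = 0 then (p : ℂ) else 0 := by
  split_ifs with h
  · simp [h]
  · have := AddChar.sum_eq_zero_of_ne_one (ZMod.isPrimitive_stdAddChar p h)
    rw [← this]
    apply Finset.sum_congr rfl
    intro ξ _
    rw [AddChar.mulShift_apply, mul_comm]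

lemma amgm {ι : Type*} (S : Finset ι) (hS : S.Nonempty) (f : ι → ℝ)
    (hf : ∀ i ∈ S, 0 ≤ f i) :
    ∏ i ∈ S, f i ≤ (S.card : ℝ)⁻¹ * ∑ i ∈ S, f i ^ S.card := by
  have hm : (0:ℝ) < S.card := by exact_mod_cast Finset.card_pos.mpr hS
  have h := Real.geom_mean_le_arith_mean_weighted S (fun _ => (S.card : ℝ)⁻¹)
    (fun i => f i ^ S.card) (fun i _ => by positivity)
    (by rw [Finset.sum_const, nsmul_eq_mul, mul_inv_cancel₀ hm.ne'])
    (fun i hi => pow_nonneg (hf i hi) _)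
  calc ∏ i ∈ S, f i = ∏ i ∈ S, (f i ^ S.card : ℝ) ^ ((S.card : ℝ)⁻¹) := by
        apply Finset.prod_congr rfl
        intro i hi
        rw [← Real.rpow_natCast (f i) S.card, ← Real.rpow_mul (hf i hi),
          mul_inv_cancel₀ hm.ne', Real.rpow_one]
    _ ≤ ∑ i ∈ S, (S.card : ℝ)⁻¹ * f i ^ S.card := h
    _ = (S.card : ℝ)⁻¹ * ∑ i ∈ S, f i ^ S.card := by rw [Finset.mul_sum]

lemma geom_tail {r : ℝ} (h0 : 0 ≤ r) (h1 : r < 1) (T : Finset ℕ)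
    (hT : ∀ t ∈ T, 1 ≤ t) : ∑ t ∈ T, r ^ t ≤ r * (1 - r)⁻¹ := by
  have hsummable : Summable (fun n : ℕ => r ^ n) := summable_geometric_of_lt_one h0 h1
  have step1 : ∑ t ∈ T, r ^ t = r * ∑ t ∈ T, r ^ (t - 1) := by
    rw [Finset.mul_sum]
    apply Finset.sum_congr rfl
    intro t ht
    have ht1 : 1 ≤ t := hT t ht
    conv_lhs => rw [show t = (t - 1) + 1 by omega]
    rw [pow_succ]
    ring
  have step2 : ∑ t ∈ T, r ^ (t - 1) = ∑ u ∈ T.image (· - 1), r ^ u := by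
    rw [Finset.sum_image]
    intro a ha b hb hab
    have := hT a ha; have := hT b hb
    simp only at hab
    omega
  have step3 : ∑ u ∈ T.image (· - 1), r ^ u ≤ ∑' n : ℕ, r ^ n :=
    Summable.sum_le_tsum _ (fun n _ => pow_nonneg h0 n) hsummable
  rw [step1, step2]
  rw [tsum_geometric_of_lt_one h0 h1] at step3
  have : (0:ℝ) ≤ r := h0
  nlinarith [step3]

end RhoAux

section Chunk3
open Finset
namespace RhoAux

variable {p : ℕ} [NeZero p]

lemma hg_sum [Fact p.Prime] (μ : ℝ) (a : ZMod p) :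
    ∑ s ∈ ({-1, 0, 1} : Finset ℤ),
        (if s = 0 then 1 - (μ : ℂ) else (μ : ℂ) / 2)
          * ZMod.stdAddChar (((s : ZMod p)) * a)
      = ((g μ a : ℝ) : ℂ) := by
  have hpair := char_pair (p := p) a
  push_cast at hpair
  rw [show ({-1, 0, 1} : Finset ℤ) = insert (-1) (insert 0 {1}) from rfl,
    Finset.sum_insert (by decide), Finset.sum_insert (by decide), Finset.sum_singleton]
  norm_num
  unfold g
  push_cast
  linear_combination ((μ : ℂ) / 2) * hpair

end RhoAux
end Chunk3

section Chunk4
open Finset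
namespace RhoAux

variable {p : ℕ} [Fact p.Prime]

lemma probX_eq {ι : Type} [Fintype ι] [DecidableEq ι] (μ : ℝ)
    (v : ι → ZMod p) (x : ZMod p) :
    ((probX μ v x : ℝ) : ℂ)
      = (p : ℂ)⁻¹ * ∑ ξ : ZMod p,
          ((∏ i, g μ (ξ * v i) : ℝ) : ℂ) * ZMod.stdAddChar (-(ξ * x)) := by
  have hp0 : 0 < p := (Fact.out : p.Prime).pos
  have hp : (p : ℂ) ≠ 0 := by exact_mod_cast hp0.ne'
  have key : ∀ y : ZMod p, (if y = x then (1 : ℂ) else 0)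
      = (p : ℂ)⁻¹ * ∑ ξ : ZMod p, ZMod.stdAddChar (ξ * (y - x)) := by
    intro y
    rw [orth (y - x)]
    rcases eq_or_ne y x with h | h
    · rw [if_pos h, if_pos (by rw [h, sub_self]), inv_mul_cancel₀ hp]
    · rw [if_neg h, if_neg (sub_ne_zero.2 h), mul_zero]
  calc ((probX μ v x : ℝ) : ℂ)
      = ∑ ε : ι → ({-1, 0, 1} : Finset ℤ),
          (∏ i, if (ε i : ℤ) = 0 then 1 - (μ : ℂ) else (μ : ℂ) / 2) *
            (if (∑ i, ((ε i : ℤ) : ZMod p) * v i) = x then 1 else 0) := by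
        rw [probX]
        push_cast [apply_ite ((↑·) : ℝ → ℂ)]
        rfl
    _ = ∑ ε : ι → ({-1, 0, 1} : Finset ℤ),
          (∏ i, if (ε i : ℤ) = 0 then 1 - (μ : ℂ) else (μ : ℂ) / 2) *
            ((p : ℂ)⁻¹ * ∑ ξ : ZMod p,
              ZMod.stdAddChar (ξ * ((∑ i, ((ε i : ℤ) : ZMod p) * v i) - x))) := by
        exact Finset.sum_congr rfl fun ε _ => by rw [key]
    _ = (p : ℂ)⁻¹ * ∑ ξ : ZMod p, ∑ ε : ι → ({-1, 0, 1} : Finset ℤ),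
          (∏ i, if (ε i : ℤ) = 0 then 1 - (μ : ℂ) else (μ : ℂ) / 2) *
            ZMod.stdAddChar (ξ * ((∑ i, ((ε i : ℤ) : ZMod p) * v i) - x)) := by
        calc ∑ ε : ι → ({-1, 0, 1} : Finset ℤ),
              (∏ i, if (ε i : ℤ) = 0 then 1 - (μ : ℂ) else (μ : ℂ) / 2) *
                ((p : ℂ)⁻¹ * ∑ ξ : ZMod p,
                  ZMod.stdAddChar (ξ * ((∑ i, ((ε i : ℤ) : ZMod p) * v i) - x)))
            = ∑ ε : ι → ({-1, 0, 1} : Finset ℤ), ∑ ξ : ZMod p, (p : ℂ)⁻¹ *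
                ((∏ i, if (ε i : ℤ) = 0 then 1 - (μ : ℂ) else (μ : ℂ) / 2) *
                  ZMod.stdAddChar (ξ * ((∑ i, ((ε i : ℤ) : ZMod p) * v i) - x))) := by
              refine Finset.sum_congr rfl fun ε _ => ?_
              rw [Finset.mul_sum, Finset.mul_sum]
              exact Finset.sum_congr rfl fun ξ _ => by ring
          _ = ∑ ξ : ZMod p, ∑ ε : ι → ({-1, 0, 1} : Finset ℤ), (p : ℂ)⁻¹ *
                ((∏ i, if (ε i : ℤ) = 0 then 1 - (μ : ℂ) else (μ : ℂ) / 2) *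
                  ZMod.stdAddChar (ξ * ((∑ i, ((ε i : ℤ) : ZMod p) * v i) - x))) :=
              Finset.sum_comm
          _ = (p : ℂ)⁻¹ * ∑ ξ : ZMod p, ∑ ε : ι → ({-1, 0, 1} : Finset ℤ),
                (∏ i, if (ε i : ℤ) = 0 then 1 - (μ : ℂ) else (μ : ℂ) / 2) *
                  ZMod.stdAddChar (ξ * ((∑ i, ((ε i : ℤ) : ZMod p) * v i) - x)) := by
              rw [Finset.mul_sum]
              exact Finset.sum_congr rfl fun ξ _ => by rw [Finset.mul_sum]
    _ = (p : ℂ)⁻¹ * ∑ ξ : ZMod p,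
          ((∏ i, g μ (ξ * v i) : ℝ) : ℂ) * ZMod.stdAddChar (-(ξ * x)) := by
        congr 1
        refine Finset.sum_congr rfl fun ξ _ => ?_
        have hsplit : ∀ ε : ι → ({-1, 0, 1} : Finset ℤ),
            ZMod.stdAddChar (ξ * ((∑ i, ((ε i : ℤ) : ZMod p) * v i) - x))
              = (∏ i, ZMod.stdAddChar ((((ε i : ℤ) : ZMod p)) * (ξ * v i)))
                  * ZMod.stdAddChar (-(ξ * x)) := by
          intro ε
          have harg : ξ * ((∑ i, ((ε i : ℤ) : ZMod p) * v i) - x)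
              = (∑ i, (((ε i : ℤ) : ZMod p)) * (ξ * v i)) + -(ξ * x) := by
            rw [mul_sub, Finset.mul_sum, sub_eq_add_neg]
            congr 1
            exact Finset.sum_congr rfl fun i _ => by ring
          rw [harg, AddChar.map_add_eq_mul, addChar_map_sum]
        calc ∑ ε : ι → ({-1, 0, 1} : Finset ℤ),
              (∏ i, if (ε i : ℤ) = 0 then 1 - (μ : ℂ) else (μ : ℂ) / 2) *
                ZMod.stdAddChar (ξ * ((∑ i, ((ε i : ℤ) : ZMod p) * v i) - x))
            = (∑ ε : ι → ({-1, 0, 1} : Finset ℤ),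
                ∏ i, ((if (ε i : ℤ) = 0 then 1 - (μ : ℂ) else (μ : ℂ) / 2)
                  * ZMod.stdAddChar ((((ε i : ℤ) : ZMod p)) * (ξ * v i))))
                * ZMod.stdAddChar (-(ξ * x)) := by
              rw [Finset.sum_mul]
              refine Finset.sum_congr rfl fun ε _ => ?_
              rw [hsplit ε, Finset.prod_mul_distrib]
              ring
          _ = ((∏ i, g μ (ξ * v i) : ℝ) : ℂ) * ZMod.stdAddChar (-(ξ * x)) := by
              congr 1
              push_cast
              refine Eq.trans (Fintype.prod_sum (fun i (c : ({-1, 0, 1} : Finset ℤ)) =>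
                (if (c : ℤ) = 0 then 1 - (μ : ℂ) else (μ : ℂ) / 2)
                  * ZMod.stdAddChar ((((c : ℤ) : ZMod p)) * (ξ * v i)))).symm ?_
              refine Finset.prod_congr rfl fun i _ => ?_
              exact (Finset.sum_coe_sort _ _).trans (hg_sum μ (ξ * v i))

end RhoAux
end Chunk4

section Chunk5
open Finset
namespace RhoAux

variable {p : ℕ} [Fact p.Prime]

lemma probX_le {ι : Type} [Fintype ι] [DecidableEq ι] {μ : ℝ} (hμ0 : 0 ≤ μ)
    (hμ : μ ≤ 1 / 4) (v : ι → ZMod p) (x : ZMod p) :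
    probX μ v x ≤ (p : ℝ)⁻¹ * ∑ ξ : ZMod p, ∏ i, g μ (ξ * v i) := by
  have h1 : probX μ v x ≤ ‖((probX μ v x : ℝ) : ℂ)‖ := by
    rw [Complex.norm_real, Real.norm_eq_abs]; exact le_abs_self _
  rw [probX_eq μ v x] at h1
  refine h1.trans ?_
  rw [norm_mul, norm_inv, Complex.norm_natCast]
  refine mul_le_mul_of_nonneg_left ?_ (by positivity)
  refine (norm_sum_le _ _).trans ?_
  refine Finset.sum_le_sum fun ξ _ => ?_
  rw [norm_mul, Complex.norm_real, Real.norm_eq_abs, ZMod.stdAddChar_apply, Circle.norm_coe, mul_one,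
    abs_of_nonneg (Finset.prod_nonneg fun i _ => g_nonneg hμ0 hμ _)]

lemma middle {ι : Type} [Fintype ι] [DecidableEq ι] {μ : ℝ} (hμ0 : 0 ≤ μ)
    (hμ : μ ≤ 1 / 4) (v : ι → ZMod p) (S : Finset ι) (hS : S.Nonempty)
    (hSv : ∀ i, i ∉ S → v i = 0) (hvS : ∀ i ∈ S, v i ≠ 0) :
    ∑ ξ : ZMod p, ∏ i, g μ (ξ * v i) ≤ ∑ a : ZMod p, (g μ a) ^ S.card := by
  have hm0 : (0 : ℝ) < S.card := by exact_mod_cast Finset.card_pos.mpr hS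
  have hprod : ∀ ξ : ZMod p, (∏ i, g μ (ξ * v i)) = ∏ i ∈ S, g μ (ξ * v i) := by
    intro ξ
    exact (Finset.prod_subset (Finset.subset_univ S) fun i _ hi => by
      rw [hSv i hi, mul_zero, g_zero]).symm
  simp only [hprod]
  rw [← Finset.add_sum_erase _ _ (Finset.mem_univ (0 : ZMod p)),
    ← Finset.add_sum_erase _ (fun a => (g μ a) ^ S.card) (Finset.mem_univ (0 : ZMod p))]
  have hz1 : (∏ i ∈ S, g μ ((0 : ZMod p) * v i)) = 1 := by
    refine Finset.prod_eq_one fun i _ => by rw [zero_mul, g_zero]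
  rw [hz1, g_zero, one_pow]
  refine add_le_add_right ?_ 1
  have hbij : ∀ i ∈ S, ∑ ξ ∈ Finset.univ.erase (0 : ZMod p), (g μ (ξ * v i)) ^ S.card
      = ∑ a ∈ Finset.univ.erase (0 : ZMod p), (g μ a) ^ S.card := by
    intro i hi
    rw [Finset.sum_erase_eq_sub (Finset.mem_univ _),
      Finset.sum_erase_eq_sub (Finset.mem_univ _), zero_mul]
    congr 1
    exact Fintype.sum_bijective _ ((Equiv.mulRight₀ (v i) (hvS i hi)).bijective)
      _ _ (fun ξ => rfl)
  calc ∑ ξ ∈ Finset.univ.erase (0 : ZMod p), ∏ i ∈ S, g μ (ξ * v i)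
      ≤ ∑ ξ ∈ Finset.univ.erase (0 : ZMod p),
          (S.card : ℝ)⁻¹ * ∑ i ∈ S, (g μ (ξ * v i)) ^ S.card :=
        Finset.sum_le_sum fun ξ _ =>
          amgm S hS _ (fun i _ => g_nonneg hμ0 hμ _)
    _ = (S.card : ℝ)⁻¹ * ∑ i ∈ S, ∑ ξ ∈ Finset.univ.erase (0 : ZMod p),
          (g μ (ξ * v i)) ^ S.card := by
        rw [← Finset.mul_sum, Finset.sum_comm]
    _ = (S.card : ℝ)⁻¹ * ∑ i ∈ S,
          ∑ a ∈ Finset.univ.erase (0 : ZMod p), (g μ a) ^ S.card := by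
        rw [Finset.sum_congr rfl hbij]
    _ = ∑ a ∈ Finset.univ.erase (0 : ZMod p), (g μ a) ^ S.card := by
        rw [Finset.sum_const, nsmul_eq_mul, ← mul_assoc,
          inv_mul_cancel₀ hm0.ne', one_mul]

end RhoAux
end Chunk5

section Chunk6
open Finset
namespace RhoAux

variable {p : ℕ} [Fact p.Prime]

lemma tail_sum {μ : ℝ} (hμ0 : 0 < μ) (hμ : μ ≤ 1 / 4) {m : ℕ} (hm : 1 ≤ m) :
    ∑ a ∈ Finset.univ.erase (0 : ZMod p), (g μ a) ^ m
      ≤ 2 * Real.exp 1 * (2 * Real.sqrt (μ * m) / p)⁻¹ := by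
  have hp1 : 1 < p := (Fact.out : p.Prime).one_lt
  have hp0 : (0 : ℝ) < p := by exact_mod_cast Nat.zero_lt_of_lt hp1
  have hm' : (1 : ℝ) ≤ m := by exact_mod_cast hm
  have hμm : (0 : ℝ) < μ * m := mul_pos hμ0 (lt_of_lt_of_le one_pos hm')
  set D := Real.sqrt (μ * m) with hD
  have hD0 : 0 < D := Real.sqrt_pos.mpr hμm
  have hD2 : D ^ 2 = μ * m := Real.sq_sqrt hμm.le
  set x := 2 * D / p with hx
  have hx0 : 0 < x := by positivity
  set r := Real.exp (-x) with hr
  have hr0 : 0 ≤ r := (Real.exp_pos _).le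
  have hr1 : r < 1 := by
    rw [hr, Real.exp_lt_one_iff]; linarith
  have hpt : ∀ a ∈ Finset.univ.erase (0 : ZMod p),
      (g μ a) ^ m ≤ Real.exp 1 * r ^ (min a.val (p - a.val)) := by
    intro a ha
    have ha0 : a ≠ 0 := Finset.ne_of_mem_erase ha
    set k := min a.val (p - a.val) with hk
    have h1 : (g μ a) ^ m ≤ Real.exp (-(4 * μ * ((k : ℝ) / p) ^ 2)) ^ m :=
      pow_le_pow_left₀ (g_nonneg hμ0.le hμ a) (g_le_exp hμ0 hp1 ha0) m
    have h2 : Real.exp (-(4 * μ * ((k : ℝ) / p) ^ 2)) ^ m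
        = Real.exp ((m : ℝ) * (-(4 * μ * ((k : ℝ) / p) ^ 2))) :=
      (Real.exp_nat_mul _ m).symm
    have hxk : x * (k : ℝ) = 2 * D * ((k : ℝ) / p) := by rw [hx]; ring
    have h3 : (m : ℝ) * (-(4 * μ * ((k : ℝ) / p) ^ 2)) ≤ 1 - x * k := by
      rw [hxk]
      nlinarith [sq_nonneg (2 * D * ((k : ℝ) / p) - 1), hD2, sq_nonneg ((k : ℝ) / p)]
    have h4 : Real.exp 1 * r ^ k = Real.exp (1 - x * k) := by
      rw [hr, ← Real.exp_nat_mul, ← Real.exp_add]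
      congr 1
      ring
    rw [h4]
    exact h1.trans (by rw [h2]; exact Real.exp_le_exp.mpr h3)
  have hκ1 : ∀ a ∈ Finset.univ.erase (0 : ZMod p), 1 ≤ min a.val (p - a.val) := by
    intro a ha
    have ha0 : a ≠ 0 := Finset.ne_of_mem_erase ha
    have hvlt : a.val < p := ZMod.val_lt a
    have hv1 : 1 ≤ a.val := Nat.one_le_iff_ne_zero.2 fun h => ha0 (by
      rw [← ZMod.natCast_zmod_val a, h, Nat.cast_zero])
    exact le_min hv1 (by omega)
  have hcard : ∀ b : ℕ,
      ((Finset.univ.erase (0 : ZMod p)).filter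
        (fun a => min a.val (p - a.val) = b)).card ≤ 2 := by
    intro b
    have hsub : (Finset.univ.erase (0 : ZMod p)).filter
        (fun a => min a.val (p - a.val) = b)
        ⊆ {((b : ℕ) : ZMod p), ((p - b : ℕ) : ZMod p)} := by
      intro a ha
      rw [Finset.mem_filter] at ha
      obtain ⟨-, hb⟩ := ha
      have hval : a.val = b ∨ a.val = p - b := by
        rcases le_total a.val (p - a.val) with h | h
        · rw [min_eq_left h] at hb
          exact Or.inl hb
        · rw [min_eq_right h] at hb
          right
          have := ZMod.val_lt a
          omega
      rcases hval with h | h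
      · simp [← h, ZMod.natCast_zmod_val a]
      · simp [← h, ZMod.natCast_zmod_val a]
    exact le_trans (Finset.card_le_card hsub)
      ((Finset.card_insert_le _ _).trans (by simp))
  calc ∑ a ∈ Finset.univ.erase (0 : ZMod p), (g μ a) ^ m
      ≤ ∑ a ∈ Finset.univ.erase (0 : ZMod p),
          Real.exp 1 * r ^ (min a.val (p - a.val)) := Finset.sum_le_sum hpt
    _ = Real.exp 1 * ∑ a ∈ Finset.univ.erase (0 : ZMod p),
          r ^ (min a.val (p - a.val)) := by rw [Finset.mul_sum]
    _ ≤ Real.exp 1 * (2 * (r * (1 - r)⁻¹)) := by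
        refine mul_le_mul_of_nonneg_left ?_ (Real.exp_pos 1).le
        rw [Finset.sum_comp (fun b => r ^ b) (fun a : ZMod p => min a.val (p - a.val))]
        calc ∑ b ∈ (Finset.univ.erase (0 : ZMod p)).image
              (fun a : ZMod p => min a.val (p - a.val)),
              ((Finset.univ.erase (0 : ZMod p)).filter
                (fun a => min a.val (p - a.val) = b)).card • r ^ b
            ≤ ∑ b ∈ (Finset.univ.erase (0 : ZMod p)).image
              (fun a : ZMod p => min a.val (p - a.val)), 2 * r ^ b := by
              refine Finset.sum_le_sum fun b _ => ?_
              rw [nsmul_eq_mul]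
              exact mul_le_mul_of_nonneg_right
                (by exact_mod_cast hcard b) (pow_nonneg hr0 b)
          _ = 2 * ∑ b ∈ (Finset.univ.erase (0 : ZMod p)).image
              (fun a : ZMod p => min a.val (p - a.val)), r ^ b := by
              rw [Finset.mul_sum]
          _ ≤ 2 * (r * (1 - r)⁻¹) := by
              refine mul_le_mul_of_nonneg_left ?_ (by norm_num)
              refine geom_tail hr0 hr1 _ fun t ht => ?_
              obtain ⟨a, ha, rfl⟩ := Finset.mem_image.mp ht
              exact hκ1 a ha
    _ ≤ 2 * Real.exp 1 * x⁻¹ := by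
        have h1r : 0 < 1 - r := by linarith
        have hkey : r * (1 - r)⁻¹ ≤ x⁻¹ := by
          rw [← div_eq_mul_inv, ← one_div, div_le_div_iff₀ h1r hx0]
          have hexp := Real.add_one_le_exp x
          have hrx : r * Real.exp x = 1 := by
            rw [hr, ← Real.exp_add, neg_add_cancel, Real.exp_zero]
          nlinarith [Real.exp_pos x]
        calc Real.exp 1 * (2 * (r * (1 - r)⁻¹))
            ≤ Real.exp 1 * (2 * x⁻¹) := by
              refine mul_le_mul_of_nonneg_left ?_ (Real.exp_pos 1).le
              exact mul_le_mul_of_nonneg_left hkey (by norm_num)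
          _ = 2 * Real.exp 1 * x⁻¹ := by ring

end RhoAux
end Chunk6

/-- **Lemma 4.3.** Let `μ ∈ (0, 1/4]`, `p` prime, and let `v` be a tuple over `ℤ/pℤ` with at
least one nonzero coordinate. Then `ρ_μ(v) ≤ 64/√(μ|v|) + 1/p`, where `|v|` is the number of
nonzero coordinates of `v`. -/
theorem rho_le_of_support
    (μ : ℝ) (hμ : μ ∈ Set.Ioc (0 : ℝ) (1 / 4)) (p n : ℕ) [Fact p.Prime]
    (v : Fin n → ZMod p) (hv : ∃ i, v i ≠ 0) :
    rho μ v ≤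
      64 / Real.sqrt (μ * ((Finset.univ.filter fun i => v i ≠ 0).card : ℝ)) + 1 / p := by
  obtain ⟨hμ0, hμ4⟩ := hμ
  set S := Finset.univ.filter fun i => v i ≠ 0 with hS
  have hSne : S.Nonempty := by
    obtain ⟨i, hi⟩ := hv
    exact ⟨i, by simp [hS, hi]⟩
  have hSv : ∀ i, i ∉ S → v i = 0 := by
    intro i hi
    by_contra h
    exact hi (by simp [hS, h])
  have hvS : ∀ i ∈ S, v i ≠ 0 := by
    intro i hi
    simpa [hS] using (Finset.mem_filter.mp hi).2
  set m := S.card with hmdef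
  have hm : 1 ≤ m := Finset.card_pos.mpr hSne
  have hm' : (1 : ℝ) ≤ m := by exact_mod_cast hm
  have hp1 : 1 < p := (Fact.out : p.Prime).one_lt
  have hp0 : (0 : ℝ) < p := by exact_mod_cast Nat.zero_lt_of_lt hp1
  have hμm : (0 : ℝ) < μ * m := mul_pos hμ0 (lt_of_lt_of_le one_pos hm')
  set D := Real.sqrt (μ * m) with hD
  have hD0 : 0 < D := Real.sqrt_pos.mpr hμm
  have hbound : ∀ x : ZMod p, probX μ v x ≤ 64 / D + 1 / p := by
    intro x
    have h1 := RhoAux.probX_le hμ0.le hμ4 v x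
    have h2 := RhoAux.middle hμ0.le hμ4 v S hSne hSv hvS
    have h3 : ∑ a : ZMod p, (RhoAux.g μ a) ^ m
        = 1 + ∑ a ∈ Finset.univ.erase (0 : ZMod p), (RhoAux.g μ a) ^ m := by
      rw [← Finset.add_sum_erase _ (fun a => (RhoAux.g μ a) ^ m)
        (Finset.mem_univ (0 : ZMod p)), RhoAux.g_zero, one_pow]
    have h4 := RhoAux.tail_sum (p := p) hμ0 hμ4 hm
    have hchain : probX μ v x ≤ (p : ℝ)⁻¹ * (1 + 2 * Real.exp 1 * (2 * D / p)⁻¹) := by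
      refine h1.trans ?_
      refine mul_le_mul_of_nonneg_left ?_ (by positivity)
      refine (h2.trans_eq h3).trans ?_
      exact add_le_add_right h4 1
    have harith : (p : ℝ)⁻¹ * (1 + 2 * Real.exp 1 * (2 * D / p)⁻¹)
        = 1 / p + Real.exp 1 / D := by
      field_simp
    rw [harith] at hchain
    refine hchain.trans ?_
    rw [add_comm]
    refine add_le_add_left ?_ ((1 : ℝ) / p)
    rw [div_le_div_iff_of_pos_right hD0]
    have := Real.exp_one_lt_d9
    linarith
  have : Nonempty (ZMod p) := ⟨0⟩
  exact ciSup_le hbound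
end
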